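/- Zero-one law for almost sure stabilities: (i) either ℙ(limsup_{k→∞} Tr(P_k) < ∞) = 1 or ℙ(limsup_{k→∞} Tr(P_k) < ∞) = 0; and (ii) either ℙ(liminf_{k→∞} Tr(P_k) < ∞) = 1 or ℙ(liminf_{k→∞} Tr(P_k) < ∞) = 0. -/

import Mathlib

open MeasureTheory Filter Matrix

noncomputable section

/-- The operator `h(X) = A X Aᵀ + Q`. -/
def hOp {n : ℕ} (A Q : Matrix (Fin n) (Fin n) ℝ) (X : Matrix (Fin n) (Fin n) ℝ) :
    Matrix (Fin n) (Fin n) ℝ :=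
  A * X * Aᵀ + Q

/-- The operator `g(X) = A X Aᵀ + Q − A X Cᵀ (C X Cᵀ + R)⁻¹ C X Aᵀ`. -/
def gOp {n m : ℕ} (A Q : Matrix (Fin n) (Fin n) ℝ) (C : Matrix (Fin m) (Fin n) ℝ)
    (R : Matrix (Fin m) (Fin m) ℝ) (X : Matrix (Fin n) (Fin n) ℝ) :
    Matrix (Fin n) (Fin n) ℝ :=
  A * X * Aᵀ + Q - A * X * Cᵀ * (C * X * Cᵀ + R)⁻¹ * (C * X * Aᵀ)

/-- The stacked observability matrix `[C; CA; …; CA^(k−1)]`. -/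
def obsMat {n m : ℕ} (C : Matrix (Fin m) (Fin n) ℝ) (A : Matrix (Fin n) (Fin n) ℝ) (k : ℕ) :
    Matrix (Fin k × Fin m) (Fin n) ℝ :=
  fun p j => (C * A ^ (p.1 : ℕ)) p.2 j

/-- The controllability matrix `[S, AS, …, A^(n−1) S]`. -/
def ctrbMat {n : ℕ} (A : Matrix (Fin n) (Fin n) ℝ) (S : Matrix (Fin n) (Fin n) ℝ) :
    Matrix (Fin n) (Fin n × Fin n) ℝ :=
  fun i p => (A ^ (p.1 : ℕ) * S) i p.2

/-- The pathwise covariance recursion: `P 0 = P0` (i.e. `P₁ = Π`), and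
`P (k+1) = g (P k)` if the packet `γ k` arrives, `P (k+1) = h (P k)` otherwise. -/
def filtSeq {n m : ℕ} (A Q : Matrix (Fin n) (Fin n) ℝ) (C : Matrix (Fin m) (Fin n) ℝ)
    (R : Matrix (Fin m) (Fin m) ℝ) {Ω : Type*} (γ : ℕ → Ω → Bool)
    (P0 : Matrix (Fin n) (Fin n) ℝ) : ℕ → Ω → Matrix (Fin n) (Fin n) ℝ
  | 0, _ => P0
  | k + 1, ω =>
      if γ k ω then gOp A Q C R (filtSeq A Q C R γ P0 k ω)
      else hOp A Q (filtSeq A Q C R γ P0 k ω)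

/-- The σ-algebra generated by `γ 0, …, γ k`. -/
def pastSigma {Ω : Type*} (γ : ℕ → Ω → Bool) (k : ℕ) : MeasurableSpace Ω :=
  ⨆ i ∈ {i : ℕ | i ≤ k}, MeasurableSpace.comap (γ i) ⊤

/-- The σ-algebra generated by `γ j, γ (j+1), …`. -/
def futureSigma {Ω : Type*} (γ : ℕ → Ω → Bool) (j : ℕ) : MeasurableSpace Ω :=
  ⨆ i ∈ {i : ℕ | j ≤ i}, MeasurableSpace.comap (γ i) ⊤

/-- A `{0,1}`-valued process is `*`-mixing if there are an integer `N ≥ 1` and a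
nonincreasing function `f` on `{N, N+1, …}` with `f n → 0` such that
`|ℙ(𝒜 ∩ ℬ) − ℙ(𝒜)ℙ(ℬ)| ≤ f(n) ℙ(𝒜) ℙ(ℬ)` whenever `n ≥ N`,
`𝒜 ∈ σ(γ 0, …, γ k)` and `ℬ ∈ σ(γ (k+n), γ (k+n+1), …)`. -/
def StarMixing {Ω : Type*} [MeasurableSpace Ω] (ℙ : Measure Ω) (γ : ℕ → Ω → Bool) : Prop :=
  ∃ N : ℕ, 0 < N ∧ ∃ f : ℕ → ℝ,
    (∀ a b : ℕ, N ≤ a → a ≤ b → f b ≤ f a) ∧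
    Tendsto f atTop (nhds 0) ∧
    ∀ nn : ℕ, N ≤ nn → ∀ k : ℕ, ∀ s t : Set Ω,
      MeasurableSet[pastSigma γ k] s → MeasurableSet[futureSigma γ (k + nn)] t →
      |(ℙ (s ∩ t)).toReal - (ℙ s).toReal * (ℙ t).toReal| ≤
        f nn * (ℙ s).toReal * (ℙ t).toReal

namespace ZOL


variable {n m : ℕ}

/-- Loewner order : `X ⪯ Y`. -/
def Lw (X Y : Matrix (Fin n) (Fin n) ℝ) : Prop := (Y - X).PosSemidef

lemma psd_transpose_eq {X : Matrix (Fin n) (Fin n) ℝ} (hX : X.PosSemidef) : Xᵀ = X := by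
  rw [← Matrix.conjTranspose_eq_transpose_of_trivial]; exact hX.1

lemma herm_transpose_eq {X : Matrix (Fin n) (Fin n) ℝ} (hX : X.IsHermitian) : Xᵀ = X := by
  rw [← Matrix.conjTranspose_eq_transpose_of_trivial]; exact hX

lemma psd_conj {k : ℕ} {X : Matrix (Fin n) (Fin n) ℝ} (hX : X.PosSemidef)
    (B : Matrix (Fin k) (Fin n) ℝ) : (B * X * Bᵀ).PosSemidef := by
  rw [← Matrix.conjTranspose_eq_transpose_of_trivial]
  exact hX.mul_mul_conjTranspose_same B

lemma psd_conj_left {p q : ℕ} {X : Matrix (Fin p) (Fin p) ℝ} (hX : X.PosSemidef)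
    (B : Matrix (Fin p) (Fin q) ℝ) : (Bᵀ * X * B).PosSemidef := by
  rw [← Matrix.conjTranspose_eq_transpose_of_trivial B]
  exact hX.conjTranspose_mul_mul_same B

lemma psd_smul {X : Matrix (Fin n) (Fin n) ℝ} (hX : X.PosSemidef) {c : ℝ} (hc : 0 ≤ c) :
    (c • X).PosSemidef := by
  refine Matrix.PosSemidef.of_dotProduct_mulVec_nonneg ?_ fun x => ?_
  · unfold Matrix.IsHermitian
    rw [Matrix.conjTranspose_smul, hX.1.eq, star_trivial]
  · rw [Matrix.smul_mulVec, dotProduct_smul, smul_eq_mul]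
    exact mul_nonneg hc (hX.dotProduct_mulVec_nonneg x)

lemma Lw.refl (X : Matrix (Fin n) (Fin n) ℝ) : Lw X X := by
  simp [Lw, Matrix.PosSemidef.zero]

lemma Lw.trans {X Y Z : Matrix (Fin n) (Fin n) ℝ} (h1 : Lw X Y) (h2 : Lw Y Z) : Lw X Z := by
  have := h2.add h1
  simpa [Lw, sub_add_sub_cancel] using this

lemma Lw.add {X Y X' Y' : Matrix (Fin n) (Fin n) ℝ} (h1 : Lw X Y) (h2 : Lw X' Y') :
    Lw (X + X') (Y + Y') := by
  have := Matrix.PosSemidef.add h1 h2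
  simpa [Lw, add_sub_add_comm] using this

lemma Lw.conj {X Y : Matrix (Fin n) (Fin n) ℝ} (h : Lw X Y) {k : ℕ}
    (B : Matrix (Fin k) (Fin n) ℝ) : Lw (B * X * Bᵀ) (B * Y * Bᵀ) := by
  have := psd_conj h B
  simpa [Lw, Matrix.mul_sub, Matrix.sub_mul] using this

lemma Lw.smul {X Y : Matrix (Fin n) (Fin n) ℝ} (h : Lw X Y) {c : ℝ} (hc : 0 ≤ c) :
    Lw (c • X) (c • Y) := by
  have := psd_smul h hc
  simpa [Lw, smul_sub] using this

lemma Lw.of_psd {X : Matrix (Fin n) (Fin n) ℝ} (hX : X.PosSemidef) : Lw 0 X := by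
  simpa [Lw] using hX

lemma Lw.psd {X Y : Matrix (Fin n) (Fin n) ℝ} (hX : X.PosSemidef) (h : Lw X Y) :
    Y.PosSemidef := by
  have := Matrix.PosSemidef.add h hX
  simpa using this

lemma Lw.trace_le {X Y : Matrix (Fin n) (Fin n) ℝ} (h : Lw X Y) : X.trace ≤ Y.trace := by
  have h0 : 0 ≤ (Y - X).trace := by
    rw [Matrix.trace]
    refine Finset.sum_nonneg fun i _ => ?_
    have := h.dotProduct_mulVec_nonneg (Pi.single i 1)
    simpa [dotProduct, Matrix.mulVec, Pi.single_apply, Matrix.diag] using this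
  rw [Matrix.trace_sub] at h0
  linarith

lemma psd_trace_nonneg {X : Matrix (Fin n) (Fin n) ℝ} (hX : X.PosSemidef) : 0 ≤ X.trace := by
  simpa using (Lw.of_psd hX).trace_le


variable {n m : ℕ}

/-- `Φ(X, K) = (A-KC) X (A-KC)ᵀ + K R Kᵀ + Q`. -/
def phiOp (A Q : Matrix (Fin n) (Fin n) ℝ) (C : Matrix (Fin m) (Fin n) ℝ)
    (R : Matrix (Fin m) (Fin m) ℝ) (K : Matrix (Fin n) (Fin m) ℝ)
    (X : Matrix (Fin n) (Fin n) ℝ) : Matrix (Fin n) (Fin n) ℝ :=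
  (A - K * C) * X * (A - K * C)ᵀ + (K * R * Kᵀ + Q)

theorem key_identity (A Q : Matrix (Fin n) (Fin n) ℝ) (C : Matrix (Fin m) (Fin n) ℝ)
    (R : Matrix (Fin m) (Fin m) ℝ) (K : Matrix (Fin n) (Fin m) ℝ)
    (X : Matrix (Fin n) (Fin n) ℝ) (hXs : Xᵀ = X) (hRs : Rᵀ = R)
    (hdet : IsUnit (C * X * Cᵀ + R).det) :
    phiOp A Q C R K X
      = gOp A Q C R X
        + (K - A * X * Cᵀ * (C * X * Cᵀ + R)⁻¹) * (C * X * Cᵀ + R)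
          * (K - A * X * Cᵀ * (C * X * Cᵀ + R)⁻¹)ᵀ := by
  set S : Matrix (Fin m) (Fin m) ℝ := C * X * Cᵀ + R with hSdef
  have hS1 : S * S⁻¹ = 1 := Matrix.mul_nonsing_inv _ hdet
  have hS2 : S⁻¹ * S = 1 := Matrix.nonsing_inv_mul _ hdet
  have hSt : Sᵀ = S := by
    rw [hSdef, Matrix.transpose_add, Matrix.transpose_mul, Matrix.transpose_mul,
      Matrix.transpose_transpose, hXs, hRs, Matrix.mul_assoc]
  have hSit : (S⁻¹)ᵀ = S⁻¹ := by rw [Matrix.transpose_nonsing_inv, hSt]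
  set L : Matrix (Fin n) (Fin m) ℝ := A * X * Cᵀ * S⁻¹ with hLdef
  have hLt : Lᵀ = S⁻¹ * (C * (X * Aᵀ)) := by
    rw [hLdef, Matrix.transpose_mul, Matrix.transpose_mul, Matrix.transpose_mul,
      Matrix.transpose_transpose, hSit, hXs]
  have h1 : S * Lᵀ = C * (X * Aᵀ) := by
    rw [hLt, ← Matrix.mul_assoc, hS1, Matrix.one_mul]
  have h2 : L * S = A * (X * Cᵀ) := by
    rw [hLdef, Matrix.mul_assoc (A * X * Cᵀ), hS2, Matrix.mul_one, Matrix.mul_assoc]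
  have expand : (K - L) * S * (K - L)ᵀ
      = K * S * Kᵀ - K * (S * Lᵀ) - (L * S) * Kᵀ + (L * S) * Lᵀ := by
    simp only [Matrix.transpose_sub, Matrix.sub_mul, Matrix.mul_sub, Matrix.mul_assoc]
    abel
  rw [expand, h1, h2, hLt]
  simp only [phiOp, gOp, ← hSdef]
  rw [hSdef]
  simp only [Matrix.transpose_sub, Matrix.transpose_mul, hXs,
    Matrix.sub_mul, Matrix.mul_sub, Matrix.mul_add, Matrix.add_mul, Matrix.mul_assoc]
  abel


section Spectral

lemma herm_le_smul_one {X : Matrix (Fin n) (Fin n) ℝ} (hX : X.IsHermitian) {b : ℝ}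
    (hb : ∀ i, hX.eigenvalues i ≤ b) : Lw X (b • 1) := by
  classical
  set U : Matrix (Fin n) (Fin n) ℝ := (hX.eigenvectorUnitary : Matrix (Fin n) (Fin n) ℝ)
  have hU : U * star U = 1 := Matrix.mem_unitaryGroup_iff.mp hX.eigenvectorUnitary.2
  have hspec : X = U * Matrix.diagonal (RCLike.ofReal ∘ hX.eigenvalues) * star U :=
    hX.spectral_theorem
  have hofreal : (RCLike.ofReal ∘ hX.eigenvalues : Fin n → ℝ) = hX.eigenvalues := by
    funext i; simp [RCLike.ofReal_real_eq_id]
  have key : U * (Matrix.diagonal (fun i => b - hX.eigenvalues i)) * star U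
      = b • (1 : Matrix (Fin n) (Fin n) ℝ) - X := by
    have h2 : (Matrix.diagonal fun i => b - hX.eigenvalues i)
        = b • (1 : Matrix (Fin n) (Fin n) ℝ) - Matrix.diagonal hX.eigenvalues := by
      rw [Matrix.smul_one_eq_diagonal, ← Matrix.diagonal_sub]
    rw [h2, Matrix.mul_sub, Matrix.sub_mul,
      Matrix.mul_smul, Matrix.mul_one, Matrix.smul_mul, hU, ← hofreal, ← hspec]
  have hdiag : (Matrix.diagonal (fun i => b - hX.eigenvalues i)).PosSemidef :=
    Matrix.posSemidef_diagonal_iff.mpr (fun i => by linarith [hb i])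
  have := hdiag.mul_mul_conjTranspose_same U
  rw [Matrix.star_eq_conjTranspose] at key
  unfold Lw
  rw [← key]
  exact this

lemma smul_one_le_herm {X : Matrix (Fin n) (Fin n) ℝ} (hX : X.IsHermitian) {a : ℝ}
    (ha : ∀ i, a ≤ hX.eigenvalues i) : Lw (a • 1) X := by
  classical
  set U : Matrix (Fin n) (Fin n) ℝ := (hX.eigenvectorUnitary : Matrix (Fin n) (Fin n) ℝ)
  have hU : U * star U = 1 := Matrix.mem_unitaryGroup_iff.mp hX.eigenvectorUnitary.2
  have hspec : X = U * Matrix.diagonal (RCLike.ofReal ∘ hX.eigenvalues) * star U :=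
    hX.spectral_theorem
  have hofreal : (RCLike.ofReal ∘ hX.eigenvalues : Fin n → ℝ) = hX.eigenvalues := by
    funext i; simp [RCLike.ofReal_real_eq_id]
  have key : U * (Matrix.diagonal (fun i => hX.eigenvalues i - a)) * star U
      = X - a • (1 : Matrix (Fin n) (Fin n) ℝ) := by
    have h2 : (Matrix.diagonal fun i => hX.eigenvalues i - a)
        = Matrix.diagonal hX.eigenvalues - a • (1 : Matrix (Fin n) (Fin n) ℝ) := by
      rw [Matrix.smul_one_eq_diagonal, ← Matrix.diagonal_sub]
    rw [h2, Matrix.mul_sub, Matrix.sub_mul,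
      Matrix.mul_smul, Matrix.mul_one, Matrix.smul_mul, hU, ← hofreal, ← hspec]
  have hdiag : (Matrix.diagonal (fun i => hX.eigenvalues i - a)).PosSemidef :=
    Matrix.posSemidef_diagonal_iff.mpr (fun i => by linarith [ha i])
  have := hdiag.mul_mul_conjTranspose_same U
  rw [Matrix.star_eq_conjTranspose] at key
  unfold Lw
  rw [← key]
  exact this

/-- Any PSD matrix is dominated by a positive multiple of the identity. -/
lemma psd_le_smul_one {X : Matrix (Fin n) (Fin n) ℝ} (hX : X.PosSemidef) :
    ∃ c : ℝ, 0 < c ∧ Lw X (c • 1) := by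
  refine ⟨1 + ∑ i, |hX.1.eigenvalues i|, by positivity, herm_le_smul_one hX.1 fun i => ?_⟩
  have h1 : hX.1.eigenvalues i ≤ |hX.1.eigenvalues i| := le_abs_self _
  have h2 : |hX.1.eigenvalues i| ≤ ∑ j, |hX.1.eigenvalues j| :=
    Finset.single_le_sum (f := fun j => |hX.1.eigenvalues j|) (fun j _ => abs_nonneg _)
      (Finset.mem_univ i)
  linarith

/-- A positive-definite matrix dominates a positive multiple of the identity. -/
lemma smul_one_le_posdef (hn : 0 < n) {X : Matrix (Fin n) (Fin n) ℝ} (hX : X.PosDef) :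
    ∃ w : ℝ, 0 < w ∧ Lw (w • 1) X := by
  classical
  have hne : (Finset.univ : Finset (Fin n)).Nonempty := by
    simpa [Finset.univ_nonempty_iff] using Fin.pos_iff_nonempty.mp hn
  refine ⟨Finset.univ.inf' hne hX.1.eigenvalues, ?_, smul_one_le_herm hX.1 fun i => ?_⟩
  · obtain ⟨i, _, hi⟩ := Finset.exists_mem_eq_inf' hne hX.1.eigenvalues
    rw [hi]; exact hX.eigenvalues_pos i
  · exact Finset.inf'_le _ (Finset.mem_univ i)

/-- Square root of a PSD matrix via its spectral decomposition. -/
def psdSqrt {X : Matrix (Fin n) (Fin n) ℝ} (hX : X.PosSemidef) : Matrix (Fin n) (Fin n) ℝ :=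
  (hX.1.eigenvectorUnitary : Matrix (Fin n) (Fin n) ℝ) *
    diagonal (Real.sqrt ∘ hX.1.eigenvalues) * (star hX.1.eigenvectorUnitary : Matrix (Fin n) (Fin n) ℝ)

lemma psdSqrt_psd {X : Matrix (Fin n) (Fin n) ℝ} (hX : X.PosSemidef) : (psdSqrt hX).PosSemidef :=
  (Matrix.PosSemidef.diagonal (fun i => Real.sqrt_nonneg _)).mul_mul_conjTranspose_same
    (hX.1.eigenvectorUnitary : Matrix (Fin n) (Fin n) ℝ)

lemma psdSqrt_mul_self {X : Matrix (Fin n) (Fin n) ℝ} (hX : X.PosSemidef) :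
    psdSqrt hX * psdSqrt hX = X := by
  set U : Matrix (Fin n) (Fin n) ℝ := (hX.1.eigenvectorUnitary : Matrix (Fin n) (Fin n) ℝ)
  set D : Matrix (Fin n) (Fin n) ℝ := diagonal (Real.sqrt ∘ hX.1.eigenvalues)
  have hU' : star U * U = 1 := Matrix.mem_unitaryGroup_iff'.mp hX.1.eigenvectorUnitary.2
  have hspec : X = U * Matrix.diagonal (RCLike.ofReal ∘ hX.1.eigenvalues) * star U :=
    hX.1.spectral_theorem
  have hd : D * D = Matrix.diagonal (RCLike.ofReal ∘ hX.1.eigenvalues) := by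
    rw [diagonal_mul_diagonal]; congr 1; funext i
    simp [Real.mul_self_sqrt (hX.eigenvalues_nonneg i)]
  show U * D * star U * (U * D * star U) = X
  conv_rhs => rw [hspec]
  rw [← hd]
  calc U * D * star U * (U * D * star U) = U * D * (star U * U) * D * star U := by
        simp only [Matrix.mul_assoc]
  _ = _ := by rw [hU', Matrix.mul_one]; simp only [Matrix.mul_assoc]

end Spectral

section OpFacts

variable {A Q : Matrix (Fin n) (Fin n) ℝ} {C : Matrix (Fin m) (Fin n) ℝ}
  {R : Matrix (Fin m) (Fin m) ℝ}

lemma S_posdef {X : Matrix (Fin n) (Fin n) ℝ} (hX : X.PosSemidef) (hR : R.PosDef) :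
    (C * X * Cᵀ + R).PosDef :=
  Matrix.PosDef.posSemidef_add (psd_conj hX C) hR

lemma S_det_isUnit {X : Matrix (Fin n) (Fin n) ℝ} (hX : X.PosSemidef) (hR : R.PosDef) :
    IsUnit (C * X * Cᵀ + R).det :=
  (S_posdef hX hR).det_pos.ne'.isUnit

lemma Lw.le_add_psd {X P : Matrix (Fin n) (Fin n) ℝ} (hP : P.PosSemidef) : Lw X (X + P) := by
  simpa [Lw] using hP

lemma g_eq_phi {X : Matrix (Fin n) (Fin n) ℝ} (hX : X.PosSemidef) (hR : R.PosDef) :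
    gOp A Q C R X = phiOp A Q C R (A * X * Cᵀ * (C * X * Cᵀ + R)⁻¹) X := by
  rw [key_identity A Q C R _ X (psd_transpose_eq hX) (herm_transpose_eq hR.1)
    (S_det_isUnit hX hR)]
  simp

lemma phi_psd (hQ : Q.PosSemidef) (hR : R.PosDef) {X : Matrix (Fin n) (Fin n) ℝ}
    (hX : X.PosSemidef) (K : Matrix (Fin n) (Fin m) ℝ) : (phiOp A Q C R K X).PosSemidef :=
  (psd_conj hX _).add ((psd_conj hR.posSemidef K).add hQ)

lemma g_psd (hQ : Q.PosSemidef) (hR : R.PosDef) {X : Matrix (Fin n) (Fin n) ℝ}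
    (hX : X.PosSemidef) : (gOp A Q C R X).PosSemidef := by
  rw [g_eq_phi hX hR]; exact phi_psd hQ hR hX _

lemma g_le_phi (hX : X.PosSemidef) (hR : R.PosDef) (K : Matrix (Fin n) (Fin m) ℝ) :
    Lw (gOp A Q C R X) (phiOp A Q C R K X) := by
  rw [key_identity A Q C R K X (psd_transpose_eq hX) (herm_transpose_eq hR.1)
    (S_det_isUnit hX hR)]
  exact Lw.le_add_psd (psd_conj (S_posdef hX hR).posSemidef _)

lemma phi_mono (K : Matrix (Fin n) (Fin m) ℝ) {X Y : Matrix (Fin n) (Fin n) ℝ}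
    (h : Lw X Y) : Lw (phiOp A Q C R K X) (phiOp A Q C R K Y) :=
  (h.conj (A - K * C)).add (Lw.refl (K * R * Kᵀ + Q))

lemma g_mono (hR : R.PosDef) {X Y : Matrix (Fin n) (Fin n) ℝ}
    (hX : X.PosSemidef) (hY : Y.PosSemidef) (h : Lw X Y) :
    Lw (gOp A Q C R X) (gOp A Q C R Y) := by
  refine Lw.trans (Lw.trans (g_le_phi hX hR (A * Y * Cᵀ * (C * Y * Cᵀ + R)⁻¹)) (phi_mono _ h)) ?_
  rw [← g_eq_phi hY hR]
  exact Lw.refl _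

lemma g_scale (hQ : Q.PosSemidef) (hR : R.PosDef) {X : Matrix (Fin n) (Fin n) ℝ}
    (hX : X.PosSemidef) {a : ℝ} (ha : 1 ≤ a) :
    Lw (gOp A Q C R (a • X)) (a • gOp A Q C R X) := by
  set K := A * X * Cᵀ * (C * X * Cᵀ + R)⁻¹
  have h1 : Lw (gOp A Q C R (a • X)) (phiOp A Q C R K (a • X)) :=
    g_le_phi (psd_smul hX (by linarith)) hR K
  have h2 : a • phiOp A Q C R K X
      = phiOp A Q C R K (a • X) + (a - 1) • (K * R * Kᵀ + Q) := by
    simp only [phiOp, Matrix.mul_smul, Matrix.smul_mul, smul_add, sub_smul, one_smul]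
    abel
  have h3 : Lw (phiOp A Q C R K (a • X)) (a • phiOp A Q C R K X) := by
    rw [h2]
    exact Lw.le_add_psd (psd_smul ((psd_conj hR.posSemidef K).add hQ) (by linarith))
  rw [g_eq_phi hX hR]
  exact h1.trans h3

lemma h_psd (hQ : Q.PosSemidef) {X : Matrix (Fin n) (Fin n) ℝ} (hX : X.PosSemidef) :
    (hOp A Q X).PosSemidef :=
  (psd_conj hX A).add hQ

lemma h_mono {X Y : Matrix (Fin n) (Fin n) ℝ} (h : Lw X Y) : Lw (hOp A Q X) (hOp A Q Y) :=
  (h.conj A).add (Lw.refl Q)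

lemma h_scale (hQ : Q.PosSemidef) {X : Matrix (Fin n) (Fin n) ℝ} {a : ℝ} (ha : 1 ≤ a) :
    Lw (hOp A Q (a • X)) (a • hOp A Q X) := by
  have h2 : a • hOp A Q X = hOp A Q (a • X) + (a - 1) • Q := by
    simp only [hOp, Matrix.mul_smul, Matrix.smul_mul, smul_add, sub_smul, one_smul]
    abel
  rw [h2]
  exact Lw.le_add_psd (psd_smul hQ (by linarith))

lemma g_le_h (hQ : Q.PosSemidef) (hR : R.PosDef) {X : Matrix (Fin n) (Fin n) ℝ}
    (hX : X.PosSemidef) : Lw (gOp A Q C R X) (hOp A Q X) := by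
  have hdiff : hOp A Q X - gOp A Q C R X
      = (A * X * Cᵀ) * (C * X * Cᵀ + R)⁻¹ * (A * X * Cᵀ)ᵀ := by
    rw [hOp, gOp, sub_sub_cancel]
    simp [Matrix.transpose_mul, psd_transpose_eq hX, Matrix.mul_assoc]
  unfold Lw
  rw [hdiff]
  exact psd_conj (S_posdef hX hR).posSemidef.inv _

end OpFacts

section Xi

variable {C : Matrix (Fin m) (Fin n) ℝ} {R : Matrix (Fin m) (Fin m) ℝ}
  {A Q : Matrix (Fin n) (Fin n) ℝ}

/-- `Ξ(X) = X − X Cᵀ (C X Cᵀ + R)⁻¹ C X`. -/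
def XiOp (C : Matrix (Fin m) (Fin n) ℝ) (R : Matrix (Fin m) (Fin m) ℝ)
    (X : Matrix (Fin n) (Fin n) ℝ) : Matrix (Fin n) (Fin n) ℝ :=
  X - X * Cᵀ * (C * X * Cᵀ + R)⁻¹ * (C * X)

lemma xi_eq_g (X : Matrix (Fin n) (Fin n) ℝ) : XiOp C R X = gOp 1 0 C R X := by
  simp [XiOp, gOp, Matrix.transpose_one, Matrix.mul_assoc]

lemma g_decomp (A Q : Matrix (Fin n) (Fin n) ℝ) (X : Matrix (Fin n) (Fin n) ℝ) :
    gOp A Q C R X = A * XiOp C R X * Aᵀ + Q := by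
  simp only [XiOp, gOp, Matrix.mul_sub, Matrix.sub_mul, Matrix.mul_assoc]
  abel

/-- If `M` is positive definite and `M ⪯ b•1` then `b⁻¹ • 1 ⪯ M⁻¹`. -/
lemma inv_lower {M : Matrix (Fin n) (Fin n) ℝ} (hM : M.PosDef) {b : ℝ} (hb : 0 < b)
    (hMb : Lw M (b • 1)) : Lw (b⁻¹ • (1 : Matrix (Fin n) (Fin n) ℝ)) M⁻¹ := by
  have hdet : IsUnit M.det := hM.det_pos.ne'.isUnit
  have hMi : M * M⁻¹ = 1 := Matrix.mul_nonsing_inv _ hdet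
  have hiM : M⁻¹ * M = 1 := Matrix.nonsing_inv_mul _ hdet
  have hMt : Mᵀ = M := psd_transpose_eq hM.posSemidef
  have hMit : (M⁻¹)ᵀ = M⁻¹ := by rw [Matrix.transpose_nonsing_inv, hMt]
  set V := psdSqrt hM.posSemidef with hV
  have hVV : V * V = M := psdSqrt_mul_self hM.posSemidef
  have hVt : Vᵀ = V := psd_transpose_eq (psdSqrt_psd hM.posSemidef)
  -- 1 - b⁻¹ • M is PSD
  have h1 : (1 - b⁻¹ • M).PosSemidef := by
    have : (1 : Matrix (Fin n) (Fin n) ℝ) - b⁻¹ • M = b⁻¹ • (b • 1 - M) := by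
      rw [smul_sub, smul_smul, inv_mul_cancel₀ hb.ne', one_smul]
    rw [this]
    exact psd_smul hMb (by positivity)
  -- M - b⁻¹ • (M*M) is PSD
  have hVMV : V * M * V = M * M := by rw [← hVV]; simp only [Matrix.mul_assoc]
  have h2 : (M - b⁻¹ • (M * M)).PosSemidef := by
    have : V * (1 - b⁻¹ • M) * Vᵀ = M - b⁻¹ • (M * M) := by
      rw [hVt, Matrix.mul_sub, Matrix.sub_mul, Matrix.mul_one, hVV, Matrix.mul_smul,
        Matrix.smul_mul, hVMV]
    rw [← this]
    exact psd_conj h1 V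
  -- conjugate by M⁻¹
  have hMM : M⁻¹ * (M * M) * M⁻¹ = 1 := by
    rw [← Matrix.mul_assoc M⁻¹ M M, hiM, Matrix.one_mul, hMi]
  have h3 : M⁻¹ - b⁻¹ • (1 : Matrix (Fin n) (Fin n) ℝ) = M⁻¹ * (M - b⁻¹ • (M * M)) * (M⁻¹)ᵀ := by
    rw [hMit, Matrix.mul_sub, Matrix.sub_mul, hiM, Matrix.one_mul, Matrix.mul_smul,
      Matrix.smul_mul, hMM]
  unfold Lw
  rw [h3]
  exact psd_conj h2 _

/-- Key quantitative lemma : `Ξ(Z) ⪰ δ • Z` for some `δ > 0`. -/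
lemma xi_lower (hR : R.PosDef) {Z : Matrix (Fin n) (Fin n) ℝ} (hZ : Z.PosSemidef) :
    ∃ δ : ℝ, 0 < δ ∧ δ ≤ 1 ∧ Lw (δ • Z) (XiOp C R Z) := by
  classical
  set T := psdSqrt hZ with hT
  have hTT : T * T = Z := psdSqrt_mul_self hZ
  have hTpsd : T.PosSemidef := psdSqrt_psd hZ
  have hTt : Tᵀ = T := psd_transpose_eq hTpsd
  set B := C * T with hB
  have hBBt : B * Bᵀ = C * Z * Cᵀ := by
    rw [hB, Matrix.transpose_mul, hTt, ← Matrix.mul_assoc, Matrix.mul_assoc C T T, hTT]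
  set S : Matrix (Fin m) (Fin m) ℝ := C * Z * Cᵀ + R with hS
  have hSpd : S.PosDef := S_posdef hZ hR
  have hSdet : IsUnit S.det := hSpd.det_pos.ne'.isUnit
  have hS1 : S * S⁻¹ = 1 := Matrix.mul_nonsing_inv _ hSdet
  have hRdet : IsUnit R.det := hR.det_pos.ne'.isUnit
  have hR2 : R⁻¹ * R = 1 := Matrix.nonsing_inv_mul _ hRdet
  set M : Matrix (Fin n) (Fin n) ℝ := 1 + Bᵀ * R⁻¹ * B with hM
  have hMpd : M.PosDef := Matrix.PosDef.add_posSemidef Matrix.PosDef.one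
    (psd_conj_left hR.posSemidef.inv B)
  -- push-through identity : M * (1 - Bᵀ S⁻¹ B) = 1
  have hpush : M * (1 - Bᵀ * S⁻¹ * B) = 1 := by
    have hSR : S - R = B * Bᵀ := by rw [hS, hBBt]; exact add_sub_cancel_right _ _
    have expand : M * (1 - Bᵀ * S⁻¹ * B)
        = 1 - Bᵀ * S⁻¹ * B + Bᵀ * R⁻¹ * B - Bᵀ * R⁻¹ * ((B * Bᵀ) * (S⁻¹ * B)) := by
      rw [hM]
      simp only [Matrix.add_mul, Matrix.mul_sub, Matrix.one_mul, Matrix.mul_one,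
        Matrix.mul_assoc]
      abel
    rw [expand, ← hSR]
    have : Bᵀ * R⁻¹ * ((S - R) * (S⁻¹ * B))
        = Bᵀ * R⁻¹ * B - Bᵀ * (S⁻¹ * B) := by
      rw [Matrix.sub_mul, ← Matrix.mul_assoc S S⁻¹ B, hS1, Matrix.one_mul, Matrix.mul_sub,
        ← Matrix.mul_assoc (Bᵀ * R⁻¹) R (S⁻¹ * B), Matrix.mul_assoc Bᵀ R⁻¹ R, hR2,
        Matrix.mul_one]
    rw [this]
    simp only [Matrix.mul_assoc]
    abel
  have hNinv : (1 : Matrix (Fin n) (Fin n) ℝ) - Bᵀ * S⁻¹ * B = M⁻¹ :=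
    (Matrix.inv_eq_right_inv hpush).symm
  -- bound M above
  obtain ⟨b, hb, hMb⟩ := psd_le_smul_one hMpd.posSemidef
  have hinv : Lw (b⁻¹ • (1 : Matrix (Fin n) (Fin n) ℝ)) M⁻¹ := inv_lower hMpd hb hMb
  -- b ≥ 1 would be nice but not guaranteed; use δ = min b⁻¹ 1
  refine ⟨min b⁻¹ 1, by positivity, min_le_right _ _, ?_⟩
  -- Ξ(Z) = T * M⁻¹ * T
  have hXiT : XiOp C R Z = T * M⁻¹ * Tᵀ := by
    rw [← hNinv, hTt, XiOp, ← hS]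
    have hZC : Z * Cᵀ = T * Bᵀ := by
      rw [hB, Matrix.transpose_mul, hTt, ← Matrix.mul_assoc, hTT]
    have hCZ : C * Z = B * T := by rw [hB, Matrix.mul_assoc, hTT]
    rw [hZC, hCZ, Matrix.mul_sub, Matrix.sub_mul, Matrix.mul_one, hTT]
    simp only [Matrix.mul_assoc]
  have hZT : Lw ((min b⁻¹ 1) • Z) (T * ((min b⁻¹ 1) • 1) * Tᵀ) := by
    have : T * ((min b⁻¹ 1) • 1) * Tᵀ = (min b⁻¹ 1) • Z := by
      rw [Matrix.mul_smul, Matrix.mul_one, Matrix.smul_mul, hTt, hTT]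
    rw [this]; exact Lw.refl _
  refine hZT.trans ?_
  rw [hXiT]
  refine Lw.conj ?_ T
  refine Lw.trans ?_ hinv
  have : Lw ((min b⁻¹ 1) • (1 : Matrix (Fin n) (Fin n) ℝ)) (b⁻¹ • 1) := by
    have : b⁻¹ • (1 : Matrix (Fin n) (Fin n) ℝ) - (min b⁻¹ 1) • 1
        = (b⁻¹ - min b⁻¹ 1) • 1 := by rw [sub_smul]
    unfold Lw
    rw [this]
    exact psd_smul (Matrix.PosSemidef.one) (by simp [min_le_left])
  exact this

end Xi

section Seq

variable {A Q : Matrix (Fin n) (Fin n) ℝ} {C : Matrix (Fin m) (Fin n) ℝ}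
  {R : Matrix (Fin m) (Fin m) ℝ}

lemma Lw.smul_le_smul {P : Matrix (Fin n) (Fin n) ℝ} (hP : P.PosSemidef) {c d : ℝ}
    (h : c ≤ d) : Lw (c • P) (d • P) := by
  unfold Lw
  rw [← sub_smul]
  exact psd_smul hP (by linarith)

/-- The deterministic switched Riccati iteration driven by a boolean sequence. -/
def seqB (A Q : Matrix (Fin n) (Fin n) ℝ) (C : Matrix (Fin m) (Fin n) ℝ)
    (R : Matrix (Fin m) (Fin m) ℝ) (s : ℕ → Bool) (X : Matrix (Fin n) (Fin n) ℝ) :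
    ℕ → Matrix (Fin n) (Fin n) ℝ
  | 0 => X
  | k + 1 => if s k then gOp A Q C R (seqB A Q C R s X k) else hOp A Q (seqB A Q C R s X k)

lemma filtSeq_eq {Ω : Type*} (γ : ℕ → Ω → Bool) (P0 : Matrix (Fin n) (Fin n) ℝ) (ω : Ω) :
    ∀ k, filtSeq A Q C R γ P0 k ω = seqB A Q C R (fun i => γ i ω) P0 k
  | 0 => rfl
  | k + 1 => by
    show (if γ k ω then _ else _) = _
    rw [filtSeq_eq γ P0 ω k]
    rfl

lemma seqB_psd (hQ : Q.PosSemidef) (hR : R.PosDef) {s : ℕ → Bool}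
    {X : Matrix (Fin n) (Fin n) ℝ} (hX : X.PosSemidef) :
    ∀ k, (seqB A Q C R s X k).PosSemidef
  | 0 => hX
  | k + 1 => by
    show Matrix.PosSemidef (if s k then _ else _)
    by_cases h : s k <;> simp only [h, if_true, if_false, Bool.false_eq_true]
    · exact g_psd hQ hR (seqB_psd hQ hR hX k)
    · exact h_psd hQ (seqB_psd hQ hR hX k)

lemma seqB_mono (hQ : Q.PosSemidef) (hR : R.PosDef) {s : ℕ → Bool}
    {X Y : Matrix (Fin n) (Fin n) ℝ} (hX : X.PosSemidef) (hY : Y.PosSemidef) (hXY : Lw X Y) :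
    ∀ k, Lw (seqB A Q C R s X k) (seqB A Q C R s Y k)
  | 0 => hXY
  | k + 1 => by
    show Lw (if s k then _ else _) (if s k then _ else _)
    by_cases h : s k <;> simp only [h, if_true, if_false, Bool.false_eq_true]
    · exact g_mono hR (seqB_psd hQ hR hX k) (seqB_psd hQ hR hY k) (seqB_mono hQ hR hX hY hXY k)
    · exact h_mono (seqB_mono hQ hR hX hY hXY k)

lemma seqB_smul (hQ : Q.PosSemidef) (hR : R.PosDef) {s : ℕ → Bool}
    {X : Matrix (Fin n) (Fin n) ℝ} (hX : X.PosSemidef) {a : ℝ} (ha : 1 ≤ a) (k : ℕ) :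
    Lw (seqB A Q C R s (a • X) k) (a • seqB A Q C R s X k) := by
  induction k with
  | zero => exact Lw.refl _
  | succ k IH =>
    have haX : (a • X).PosSemidef := psd_smul hX (by linarith)
    have hsk : (seqB A Q C R s (a • X) k).PosSemidef := seqB_psd hQ hR haX k
    have hsx : (seqB A Q C R s X k).PosSemidef := seqB_psd hQ hR hX k
    have hax : (a • seqB A Q C R s X k).PosSemidef := psd_smul hsx (by linarith)
    show Lw (if s k then _ else _) (a • if s k then _ else _)
    by_cases h : s k <;> simp only [h, if_true, if_false, Bool.false_eq_true]
    · exact (g_mono hR hsk hax IH).trans (g_scale hQ hR hsx ha)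
    · exact (h_mono IH).trans (h_scale (X := seqB A Q C R s X k) hQ ha)

lemma seqB_shift (s : ℕ → Bool) (X : Matrix (Fin n) (Fin n) ℝ) (j : ℕ) :
    ∀ t, seqB A Q C R s X (j + t) = seqB A Q C R (fun i => s (j + i)) (seqB A Q C R s X j) t
  | 0 => rfl
  | t + 1 => by
    show seqB A Q C R s X (j + t + 1) = _
    show (if s (j + t) then _ else _) = (if s (j + t) then _ else _)
    rw [seqB_shift s X j t]

lemma seqB_congr {s s' : ℕ → Bool} (X : Matrix (Fin n) (Fin n) ℝ) :
    ∀ k, (∀ i, i < k → s i = s' i) → seqB A Q C R s X k = seqB A Q C R s' X k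
  | 0, _ => rfl
  | k + 1, h => by
    show (if s k then _ else _) = (if s' k then _ else _)
    rw [seqB_congr X k (fun i hi => h i (Nat.lt_succ_of_lt hi)), h k (Nat.lt_succ_self k)]

/-- The deterministic "all-h" lower-bound sequence : `ctrlSum (k+1) = h(ctrlSum k)`. -/
def ctrlSum (A Q : Matrix (Fin n) (Fin n) ℝ) : ℕ → Matrix (Fin n) (Fin n) ℝ
  | 0 => 0
  | k + 1 => hOp A Q (ctrlSum A Q k)

lemma ctrlSum_psd (hQ : Q.PosSemidef) : ∀ k, (ctrlSum A Q k).PosSemidef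
  | 0 => Matrix.PosSemidef.zero
  | k + 1 => h_psd hQ (ctrlSum_psd hQ k)

/-- `gIter k = g^[k] 0`. -/
def gIter (A Q : Matrix (Fin n) (Fin n) ℝ) (C : Matrix (Fin m) (Fin n) ℝ)
    (R : Matrix (Fin m) (Fin m) ℝ) : ℕ → Matrix (Fin n) (Fin n) ℝ
  | 0 => 0
  | k + 1 => gOp A Q C R (gIter A Q C R k)

lemma gIter_psd (hQ : Q.PosSemidef) (hR : R.PosDef) : ∀ k, (gIter A Q C R k).PosSemidef
  | 0 => Matrix.PosSemidef.zero
  | k + 1 => g_psd hQ hR (gIter_psd hQ hR k)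

/-- Any trajectory of the switched iteration dominates the pure-`g` iteration from `0`. -/
lemma seqB_lb (hQ : Q.PosSemidef) (hR : R.PosDef) {s : ℕ → Bool}
    {X : Matrix (Fin n) (Fin n) ℝ} (hX : X.PosSemidef) :
    ∀ k, Lw (gIter A Q C R k) (seqB A Q C R s X k)
  | 0 => Lw.of_psd hX
  | k + 1 => by
    have IH := seqB_lb hQ hR hX k (s := s)
    have h1 : Lw (gOp A Q C R (gIter A Q C R k)) (gOp A Q C R (seqB A Q C R s X k)) :=
      g_mono hR (gIter_psd hQ hR k) (seqB_psd hQ hR hX k) IH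
    show Lw (gOp A Q C R (gIter A Q C R k)) (if s k then _ else _)
    by_cases h : s k <;> simp only [h, if_true, if_false, Bool.false_eq_true]
    · exact h1
    · exact h1.trans (g_le_h hQ hR (seqB_psd hQ hR hX k))

/-- The pure-`g` iteration dominates a positive multiple of the controllability sum. -/
lemma gIter_lb (hQ : Q.PosSemidef) (hR : R.PosDef) (k : ℕ) :
    ∃ ε : ℝ, 0 < ε ∧ ε ≤ 1 ∧ Lw (ε • ctrlSum A Q k) (gIter A Q C R k) := by
  induction k with
  | zero =>
    exact ⟨1, by norm_num, le_refl 1,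
      by simpa [ctrlSum, gIter] using Lw.refl (0 : Matrix (Fin n) (Fin n) ℝ)⟩
  | succ k IH0 =>
    obtain ⟨ε, hε, hε1, IH⟩ := IH0
    obtain ⟨δ, hδ, hδ1, hXi⟩ := xi_lower hR (gIter_psd hQ hR k (A := A) (C := C) (R := R))
    refine ⟨min (δ * ε) 1, by positivity, min_le_right _ _, ?_⟩
    have step1 : Lw (A * (δ • gIter A Q C R k) * Aᵀ + Q) (gIter A Q C R (k + 1)) := by
      show Lw _ (gOp A Q C R (gIter A Q C R k))
      rw [g_decomp]
      exact ((Lw.conj hXi A).add (Lw.refl Q))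
    have step2 : Lw (A * ((δ * ε) • ctrlSum A Q k) * Aᵀ + Q)
        (A * (δ • gIter A Q C R k) * Aᵀ + Q) := by
      refine Lw.add (Lw.conj ?_ A) (Lw.refl Q)
      rw [mul_smul]
      exact (IH.smul hδ.le)
    have step3 : Lw ((min (δ * ε) 1) • ctrlSum A Q (k + 1))
        (A * ((δ * ε) • ctrlSum A Q k) * Aᵀ + Q) := by
      have hexp : (min (δ * ε) 1) • ctrlSum A Q (k + 1)
          = (min (δ * ε) 1) • (A * ctrlSum A Q k * Aᵀ) + (min (δ * ε) 1) • Q := by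
        show (min (δ * ε) 1) • hOp A Q (ctrlSum A Q k) = _
        rw [hOp, smul_add]
      rw [hexp]
      have hAXA : (A * ((δ * ε) • ctrlSum A Q k) * Aᵀ) = (δ * ε) • (A * ctrlSum A Q k * Aᵀ) := by
        rw [Matrix.mul_smul, Matrix.smul_mul]
      rw [hAXA]
      refine Lw.add (Lw.smul_le_smul (psd_conj (ctrlSum_psd hQ k) A) (min_le_left _ _)) ?_
      have h5 : Lw ((min (δ * ε) 1) • Q) ((1:ℝ) • Q) := Lw.smul_le_smul hQ (min_le_right _ _)
      simpa using h5
    exact (step3.trans step2).trans step1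

end Seq

section Ctrb

variable {A Q : Matrix (Fin n) (Fin n) ℝ} {C : Matrix (Fin m) (Fin n) ℝ}
  {R : Matrix (Fin m) (Fin m) ℝ}

lemma ctrlSum_eq_sum (A Q : Matrix (Fin n) (Fin n) ℝ) :
    ∀ k, ctrlSum A Q k = ∑ i ∈ Finset.range k, A ^ i * Q * (Aᵀ) ^ i
  | 0 => by simp [ctrlSum]
  | k + 1 => by
    show hOp A Q (ctrlSum A Q k) = _
    rw [hOp, ctrlSum_eq_sum A Q k, Finset.sum_range_succ']
    rw [Finset.mul_sum, Finset.sum_mul]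
    congr 1
    · refine Finset.sum_congr rfl fun i _ => ?_
      rw [pow_succ' A i, pow_succ (Aᵀ) i]
      simp only [Matrix.mul_assoc]
    · simp

lemma ctrb_mul_transpose (hQ : Q.PosSemidef) :
    ctrbMat A (psdSqrt hQ) * (ctrbMat A (psdSqrt hQ))ᵀ = ctrlSum A Q n := by
  have hTt : ((psdSqrt hQ))ᵀ = (psdSqrt hQ) := psd_transpose_eq (psdSqrt_psd hQ)
  have hmat : ∀ a : ℕ, (A ^ a * (psdSqrt hQ)) * (A ^ a * (psdSqrt hQ))ᵀ = A ^ a * Q * (Aᵀ) ^ a := by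
    intro a
    rw [Matrix.transpose_mul, hTt, Matrix.transpose_pow]
    rw [Matrix.mul_assoc (A ^ a), ← Matrix.mul_assoc (psdSqrt hQ), psdSqrt_mul_self hQ]
    simp only [Matrix.mul_assoc]
  rw [ctrlSum_eq_sum]
  ext i j
  rw [Matrix.mul_apply, Fintype.sum_prod_type, Matrix.sum_apply]
  rw [← Fin.sum_univ_eq_sum_range (fun a => (A ^ a * Q * (Aᵀ) ^ a) i j) n]
  refine Finset.sum_congr rfl fun a _ => ?_
  rw [← hmat (a : ℕ), Matrix.mul_apply]
  refine Finset.sum_congr rfl fun b _ => ?_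
  simp [ctrbMat, Matrix.transpose_apply]

lemma ctrlSum_posdef (hQ : Q.PosSemidef) (hrank : (ctrbMat A (psdSqrt hQ)).rank = n) :
    (ctrlSum A Q n).PosDef := by
  classical
  set G := ctrbMat A (psdSqrt hQ) with hG
  have hGG : G * Gᵀ = ctrlSum A Q n := ctrb_mul_transpose hQ
  have hinj : Function.Injective (Gᵀ.mulVecLin) := by
    have hrt : Gᵀ.rank = n := by rw [Matrix.rank_transpose]; exact hrank
    have h1 := LinearMap.finrank_range_add_finrank_ker (Gᵀ.mulVecLin)
    rw [Module.finrank_fin_fun] at h1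
    have hr : Module.finrank ℝ (LinearMap.range Gᵀ.mulVecLin) = n := hrt
    rw [hr] at h1
    have hker : Module.finrank ℝ (LinearMap.ker Gᵀ.mulVecLin) = 0 := by omega
    have : LinearMap.ker Gᵀ.mulVecLin = ⊥ := Submodule.finrank_eq_zero.mp hker
    exact LinearMap.ker_eq_bot.mp this
  rw [← hGG]
  refine Matrix.PosDef.of_dotProduct_mulVec_pos ?_ ?_
  · rw [← Matrix.conjTranspose_eq_transpose_of_trivial]
    exact Matrix.isHermitian_mul_conjTranspose_self G
  · intro x hx
    have hy : Gᵀ *ᵥ x ≠ 0 := by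
      intro h0
      apply hx
      apply hinj
      rw [Matrix.mulVecLin_apply, h0, map_zero]
    have : star x ⬝ᵥ (G * Gᵀ) *ᵥ x = star (Gᵀ *ᵥ x) ⬝ᵥ (Gᵀ *ᵥ x) := by
      rw [← Matrix.mulVec_mulVec, Matrix.dotProduct_mulVec, star_trivial, star_trivial,
        ← Matrix.mulVec_transpose]
    rw [this]
    exact Matrix.dotProduct_star_self_pos_iff.mpr hy

end Ctrb

section Transfer

variable {A Q : Matrix (Fin n) (Fin n) ℝ} {C : Matrix (Fin m) (Fin n) ℝ}
  {R : Matrix (Fin m) (Fin m) ℝ}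

lemma posdef_smul {P : Matrix (Fin n) (Fin n) ℝ} (hP : P.PosDef) {c : ℝ} (hc : 0 < c) :
    (c • P).PosDef := by
  refine Matrix.PosDef.of_dotProduct_mulVec_pos ?_ fun x hx => ?_
  · unfold Matrix.IsHermitian
    rw [Matrix.conjTranspose_smul, hP.1.eq, star_trivial]
  · rw [Matrix.smul_mulVec, dotProduct_smul, smul_eq_mul]
    exact mul_pos hc (hP.dotProduct_mulVec_pos hx)

/-- Eventually-bounded (by a natural number) real sequences. -/
def BddEv (u : ℕ → ℝ) : Prop := ∃ M : ℕ, ∀ᶠ k in atTop, u k ≤ M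

/-- Frequently-bounded real sequences. -/
def BddFr (u : ℕ → ℝ) : Prop := ∃ M : ℕ, ∃ᶠ k in atTop, u k ≤ M

lemma ereal_le_nat_of_lt_top {a : EReal} (h : a < ⊤) : ∃ M : ℕ, a ≤ ((M : ℝ) : EReal) := by
  induction a using EReal.rec with
  | bot => exact ⟨0, bot_le⟩
  | coe x => exact ⟨⌈x⌉₊, by exact_mod_cast Nat.le_ceil x⟩
  | top => exact absurd h (lt_irrefl ⊤)

lemma limsup_lt_top_iff {u : ℕ → ℝ} :
    atTop.limsup (fun k => ((u k : ℝ) : EReal)) < ⊤ ↔ BddEv u := by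
  constructor
  · intro h
    rw [Filter.limsup_eq] at h
    obtain ⟨a, ha, halt⟩ := sInf_lt_iff.mp h
    obtain ⟨M, hM⟩ := ereal_le_nat_of_lt_top halt
    exact ⟨M, ha.mono fun k hk => by exact_mod_cast hk.trans hM⟩
  · rintro ⟨M, hM⟩
    refine lt_of_le_of_lt (Filter.limsup_le_of_le ?_ ?_) (EReal.coe_lt_top (M : ℝ))
    · isBoundedDefault
    · exact hM.mono fun k hk => by exact_mod_cast hk
lemma liminf_lt_top_iff {u : ℕ → ℝ} :
    atTop.liminf (fun k => ((u k : ℝ) : EReal)) < ⊤ ↔ BddFr u := by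
  constructor
  · intro h
    obtain ⟨M, hM⟩ := ereal_le_nat_of_lt_top h
    have h2 : atTop.liminf (fun k => ((u k : ℝ) : EReal)) < (((M : ℝ) + 1 : ℝ) : EReal) :=
      lt_of_le_of_lt hM (by exact_mod_cast lt_add_one (M : ℝ))
    have h3 := Filter.frequently_lt_of_liminf_lt (h := h2)
    refine ⟨M + 1, h3.mono fun k hk => ?_⟩
    have : (u k : ℝ) < (M : ℝ) + 1 := by exact_mod_cast hk
    push_cast
    linarith
  · rintro ⟨M, hM⟩
    refine lt_of_le_of_lt (Filter.liminf_le_of_frequently_le ?_ ?_) (EReal.coe_lt_top (M : ℝ))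
    · exact hM.mono fun k hk => by exact_mod_cast hk
    · isBoundedDefault

/-- Trajectories from two PSD initial conditions are comparable (after time `n`)
up to a multiplicative constant. -/
lemma trace_transfer (hn : 0 < n) (hQ : Q.PosSemidef) (hR : R.PosDef)
    (hrank : (ctrbMat A (psdSqrt hQ)).rank = n) (s : ℕ → Bool)
    {X Y : Matrix (Fin n) (Fin n) ℝ} (hX : X.PosSemidef) (hY : Y.PosSemidef) :
    ∃ a : ℝ, 1 ≤ a ∧ ∀ t : ℕ,
      (seqB A Q C R s Y (n + t)).trace ≤ a * (seqB A Q C R s X (n + t)).trace := by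
  obtain ⟨ε, hε, hε1, hlb⟩ := gIter_lb hQ hR n (A := A) (C := C) (R := R)
  have hW : (ε • ctrlSum A Q n).PosDef := posdef_smul (ctrlSum_posdef hQ hrank) hε
  obtain ⟨w, hw, hwle⟩ := smul_one_le_posdef hn hW
  have lower : Lw (w • (1 : Matrix (Fin n) (Fin n) ℝ)) (seqB A Q C R s X n) :=
    (hwle.trans hlb).trans (seqB_lb hQ hR hX n)
  obtain ⟨c, hc, hcle⟩ := psd_le_smul_one (seqB_psd hQ hR hY n (s := s) (A := A) (C := C) (R := R))
  set a := max 1 (c / w) with ha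
  have ha1 : (1 : ℝ) ≤ a := le_max_left _ _
  have hcaw : c ≤ a * w := by
    have : c / w ≤ a := le_max_right _ _
    calc c = (c / w) * w := by field_simp
    _ ≤ a * w := by nlinarith
  have key : Lw (seqB A Q C R s Y n) (a • seqB A Q C R s X n) := by
    refine (hcle.trans ?_)
    have h1 : Lw (c • (1 : Matrix (Fin n) (Fin n) ℝ)) ((a * w) • 1) :=
      Lw.smul_le_smul Matrix.PosSemidef.one hcaw
    refine h1.trans ?_
    rw [mul_smul]
    exact lower.smul (by linarith)
  refine ⟨a, ha1, fun t => ?_⟩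
  have hYn : (seqB A Q C R s Y n).PosSemidef := seqB_psd hQ hR hY n
  have hXn : (seqB A Q C R s X n).PosSemidef := seqB_psd hQ hR hX n
  have haXn : (a • seqB A Q C R s X n).PosSemidef := psd_smul hXn (by linarith)
  have comp : Lw (seqB A Q C R s Y (n + t)) (a • seqB A Q C R s X (n + t)) := by
    rw [seqB_shift s Y n t, seqB_shift s X n t]
    refine (seqB_mono hQ hR hYn haXn key t).trans ?_
    exact seqB_smul hQ hR hXn ha1 t
  have := comp.trace_le
  rwa [Matrix.trace_smul, smul_eq_mul] at this

lemma bddEv_transfer (hn : 0 < n) (hQ : Q.PosSemidef) (hR : R.PosDef)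
    (hrank : (ctrbMat A (psdSqrt hQ)).rank = n) (s : ℕ → Bool)
    {X Y : Matrix (Fin n) (Fin n) ℝ} (hX : X.PosSemidef) (hY : Y.PosSemidef)
    (h : BddEv (fun k => (seqB A Q C R s X k).trace)) :
    BddEv (fun k => (seqB A Q C R s Y k).trace) := by
  obtain ⟨a, ha1, hcomp⟩ := trace_transfer hn hQ hR hrank s hX hY
  obtain ⟨M, hM⟩ := h
  rw [Filter.eventually_atTop] at hM
  obtain ⟨K, hK⟩ := hM
  refine ⟨⌈a * M⌉₊, Filter.eventually_atTop.mpr ⟨max K n, fun k hk => ?_⟩⟩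
  have hkn : n ≤ k := le_trans (le_max_right _ _) hk
  have hkK : K ≤ k := le_trans (le_max_left _ _) hk
  have hsplit : n + (k - n) = k := Nat.add_sub_cancel' hkn
  have h1 := hcomp (k - n)
  rw [hsplit] at h1
  have h2 : (seqB A Q C R s X k).trace ≤ M := hK k hkK
  calc (seqB A Q C R s Y k).trace ≤ a * (seqB A Q C R s X k).trace := h1
  _ ≤ a * M := by nlinarith
  _ ≤ ⌈a * M⌉₊ := Nat.le_ceil _

lemma bddFr_transfer (hn : 0 < n) (hQ : Q.PosSemidef) (hR : R.PosDef)
    (hrank : (ctrbMat A (psdSqrt hQ)).rank = n) (s : ℕ → Bool)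
    {X Y : Matrix (Fin n) (Fin n) ℝ} (hX : X.PosSemidef) (hY : Y.PosSemidef)
    (h : BddFr (fun k => (seqB A Q C R s X k).trace)) :
    BddFr (fun k => (seqB A Q C R s Y k).trace) := by
  obtain ⟨a, ha1, hcomp⟩ := trace_transfer hn hQ hR hrank s hX hY
  obtain ⟨M, hM⟩ := h
  rw [Filter.frequently_atTop] at hM
  refine ⟨⌈a * M⌉₊, Filter.frequently_atTop.mpr fun K => ?_⟩
  obtain ⟨k, hkK, hk⟩ := hM (max K n)
  have hkn : n ≤ k := le_trans (le_max_right _ _) hkK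
  have hsplit : n + (k - n) = k := Nat.add_sub_cancel' hkn
  have h1 := hcomp (k - n)
  rw [hsplit] at h1
  refine ⟨k, le_trans (le_max_left _ _) hkK, ?_⟩
  calc (seqB A Q C R s Y k).trace ≤ a * (seqB A Q C R s X k).trace := h1
  _ ≤ a * M := by nlinarith
  _ ≤ ⌈a * M⌉₊ := Nat.le_ceil _

/-- Shift invariance of the boundedness predicates. -/
lemma bddEv_shift (u : ℕ → ℝ) (j : ℕ) : BddEv u ↔ BddEv (fun t => u (j + t)) := by
  constructor
  · rintro ⟨M, hM⟩
    rw [Filter.eventually_atTop] at hM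
    obtain ⟨K, hK⟩ := hM
    exact ⟨M, Filter.eventually_atTop.mpr ⟨K, fun t ht => hK _ (le_trans ht (Nat.le_add_left _ _))⟩⟩
  · rintro ⟨M, hM⟩
    rw [Filter.eventually_atTop] at hM
    obtain ⟨K, hK⟩ := hM
    refine ⟨M, Filter.eventually_atTop.mpr ⟨j + K, fun k hk => ?_⟩⟩
    have : k = j + (k - j) := (Nat.add_sub_cancel' (le_trans (Nat.le_add_right _ _) hk)).symm
    rw [this]
    exact hK _ (by omega)

lemma bddFr_shift (u : ℕ → ℝ) (j : ℕ) : BddFr u ↔ BddFr (fun t => u (j + t)) := by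
  constructor
  · rintro ⟨M, hM⟩
    rw [Filter.frequently_atTop] at hM
    refine ⟨M, Filter.frequently_atTop.mpr fun K => ?_⟩
    obtain ⟨k, hk, hku⟩ := hM (j + K)
    refine ⟨k - j, by omega, ?_⟩
    show u (j + (k - j)) ≤ M
    rwa [Nat.add_sub_cancel' (by omega : j ≤ k)]
  · rintro ⟨M, hM⟩
    rw [Filter.frequently_atTop] at hM
    refine ⟨M, Filter.frequently_atTop.mpr fun K => ?_⟩
    obtain ⟨t, ht, htu⟩ := hM K
    exact ⟨j + t, by omega, htu⟩

end Transfer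

section Meas

variable {A Q : Matrix (Fin n) (Fin n) ℝ} {C : Matrix (Fin m) (Fin n) ℝ}
  {R : Matrix (Fin m) (Fin m) ℝ}

lemma meas_seqB_set (X : Matrix (Fin n) (Fin n) ℝ) (k : ℕ)
    (P : Matrix (Fin n) (Fin n) ℝ → Prop) :
    MeasurableSet {s : ℕ → Bool | P (seqB A Q C R s X k)} := by
  classical
  have hF : Measurable (fun (s : ℕ → Bool) (i : Fin k) => s (i : ℕ)) :=
    measurable_pi_lambda _ fun i => measurable_pi_apply (i : ℕ)
  have heq : {s : ℕ → Bool | P (seqB A Q C R s X k)}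
      = (fun (s : ℕ → Bool) (i : Fin k) => s (i : ℕ)) ⁻¹'
        {v : Fin k → Bool | P (seqB A Q C R (fun i => if h : i < k then v ⟨i, h⟩ else false) X k)} := by
    ext s
    simp only [Set.mem_setOf_eq, Set.mem_preimage]
    have : seqB A Q C R (fun i => if h : i < k then s i else false) X k = seqB A Q C R s X k :=
      seqB_congr X k (fun i hi => by simp [hi])
    rw [this]
  rw [heq]
  exact hF MeasurableSet.of_discrete

variable {Ω : Type*}

lemma measurable_future (γ : ℕ → Ω → Bool) {j i : ℕ} (hij : j ≤ i) :
    Measurable[futureSigma γ j] (γ i) := by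
  rw [measurable_iff_comap_le]
  refine le_trans (MeasurableSpace.comap_mono le_top) ?_
  exact le_iSup₂ (f := fun (i : ℕ) (_ : i ∈ {i : ℕ | j ≤ i}) => MeasurableSpace.comap (γ i) ⊤) i hij

lemma measurable_past (γ : ℕ → Ω → Bool) {k i : ℕ} (hik : i ≤ k) :
    Measurable[pastSigma γ k] (γ i) := by
  rw [measurable_iff_comap_le]
  refine le_trans (MeasurableSpace.comap_mono le_top) ?_
  exact le_iSup₂ (f := fun (i : ℕ) (_ : i ∈ {i : ℕ | i ≤ k}) => MeasurableSpace.comap (γ i) ⊤) i hik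

lemma measurable_shiftMap (γ : ℕ → Ω → Bool) (j : ℕ) :
    Measurable[futureSigma γ j] (fun ω (i : ℕ) => γ (j + i) ω) := by
  letI : MeasurableSpace Ω := futureSigma γ j
  exact measurable_pi_lambda _ fun i => measurable_future γ (Nat.le_add_right j i)

/-- The sets of driving sequences giving (eventually/frequently) bounded traces. -/
def SBddEv (A Q : Matrix (Fin n) (Fin n) ℝ) (C : Matrix (Fin m) (Fin n) ℝ)
    (R : Matrix (Fin m) (Fin m) ℝ) (X : Matrix (Fin n) (Fin n) ℝ) : Set (ℕ → Bool) :=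
  {s | BddEv (fun k => (seqB A Q C R s X k).trace)}

def SBddFr (A Q : Matrix (Fin n) (Fin n) ℝ) (C : Matrix (Fin m) (Fin n) ℝ)
    (R : Matrix (Fin m) (Fin m) ℝ) (X : Matrix (Fin n) (Fin n) ℝ) : Set (ℕ → Bool) :=
  {s | BddFr (fun k => (seqB A Q C R s X k).trace)}

lemma SBddEv_meas (X : Matrix (Fin n) (Fin n) ℝ) : MeasurableSet (SBddEv A Q C R X) := by
  have heq : SBddEv A Q C R X = ⋃ M : ℕ, ⋃ K : ℕ, ⋂ k : ℕ, ⋂ (_ : K ≤ k),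
      {s : ℕ → Bool | (seqB A Q C R s X k).trace ≤ (M : ℝ)} := by
    ext s
    simp only [SBddEv, Set.mem_setOf_eq, BddEv, Filter.eventually_atTop, Set.mem_iUnion,
      Set.mem_iInter, Set.mem_setOf_eq]
  rw [heq]
  exact MeasurableSet.iUnion fun M => MeasurableSet.iUnion fun K =>
    MeasurableSet.iInter fun k => MeasurableSet.iInter fun _ =>
      meas_seqB_set X k (fun Z => Z.trace ≤ (M : ℝ))

lemma SBddFr_meas (X : Matrix (Fin n) (Fin n) ℝ) : MeasurableSet (SBddFr A Q C R X) := by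
  have heq : SBddFr A Q C R X = ⋃ M : ℕ, ⋂ K : ℕ, ⋃ k : ℕ, ⋃ (_ : K ≤ k),
      {s : ℕ → Bool | (seqB A Q C R s X k).trace ≤ (M : ℝ)} := by
    ext s
    simp only [SBddFr, Set.mem_setOf_eq, BddFr, Filter.frequently_atTop, Set.mem_iUnion,
      Set.mem_iInter, Set.mem_setOf_eq]
    constructor
    · rintro ⟨M, hM⟩
      exact ⟨M, fun K => by obtain ⟨k, hk, hu⟩ := hM K; exact ⟨k, hk, hu⟩⟩
    · rintro ⟨M, hM⟩
      exact ⟨M, fun K => by obtain ⟨k, hk, hu⟩ := hM K; exact ⟨k, hk, hu⟩⟩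
  rw [heq]
  exact MeasurableSet.iUnion fun M => MeasurableSet.iInter fun K =>
    MeasurableSet.iUnion fun k => MeasurableSet.iUnion fun _ =>
      meas_seqB_set X k (fun Z => Z.trace ≤ (M : ℝ))

/-- The limsup-stability event, as a preimage of a fixed tail set under the shifted process. -/
lemma Esup_eq_preimage (hn : 0 < n) (hQ : Q.PosSemidef) (hR : R.PosDef)
    (hrank : (ctrbMat A (psdSqrt hQ)).rank = n) (γ : ℕ → Ω → Bool)
    {P0 : Matrix (Fin n) (Fin n) ℝ} (hP0 : P0.PosSemidef) (j : ℕ) :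
    {ω | atTop.limsup (fun k => ((filtSeq A Q C R γ P0 k ω).trace : EReal)) < ⊤}
      = (fun ω (i : ℕ) => γ (j + i) ω) ⁻¹' (SBddEv A Q C R P0) := by
  ext ω
  simp only [Set.mem_setOf_eq, Set.mem_preimage, SBddEv]
  have hfix : (fun k => ((filtSeq A Q C R γ P0 k ω).trace : EReal))
      = fun k => ((seqB A Q C R (fun i => γ i ω) P0 k).trace : EReal) := by
    funext k; rw [filtSeq_eq]
  rw [hfix, limsup_lt_top_iff]
  rw [bddEv_shift _ j]
  have hshift : (fun t => (seqB A Q C R (fun i => γ i ω) P0 (j + t)).trace)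
      = fun t => (seqB A Q C R (fun i => γ (j + i) ω) (seqB A Q C R (fun i => γ i ω) P0 j) t).trace := by
    funext t; rw [seqB_shift]
  rw [hshift]
  have hPj : (seqB A Q C R (fun i => γ i ω) P0 j).PosSemidef := seqB_psd hQ hR hP0 j
  constructor
  · exact bddEv_transfer hn hQ hR hrank _ hPj hP0
  · exact bddEv_transfer hn hQ hR hrank _ hP0 hPj

lemma Einf_eq_preimage (hn : 0 < n) (hQ : Q.PosSemidef) (hR : R.PosDef)
    (hrank : (ctrbMat A (psdSqrt hQ)).rank = n) (γ : ℕ → Ω → Bool)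
    {P0 : Matrix (Fin n) (Fin n) ℝ} (hP0 : P0.PosSemidef) (j : ℕ) :
    {ω | atTop.liminf (fun k => ((filtSeq A Q C R γ P0 k ω).trace : EReal)) < ⊤}
      = (fun ω (i : ℕ) => γ (j + i) ω) ⁻¹' (SBddFr A Q C R P0) := by
  ext ω
  simp only [Set.mem_setOf_eq, Set.mem_preimage, SBddFr]
  have hfix : (fun k => ((filtSeq A Q C R γ P0 k ω).trace : EReal))
      = fun k => ((seqB A Q C R (fun i => γ i ω) P0 k).trace : EReal) := by
    funext k; rw [filtSeq_eq]
  rw [hfix, liminf_lt_top_iff]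
  rw [bddFr_shift _ j]
  have hshift : (fun t => (seqB A Q C R (fun i => γ i ω) P0 (j + t)).trace)
      = fun t => (seqB A Q C R (fun i => γ (j + i) ω) (seqB A Q C R (fun i => γ i ω) P0 j) t).trace := by
    funext t; rw [seqB_shift]
  rw [hshift]
  have hPj : (seqB A Q C R (fun i => γ i ω) P0 j).PosSemidef := seqB_psd hQ hR hP0 j
  constructor
  · exact bddFr_transfer hn hQ hR hrank _ hPj hP0
  · exact bddFr_transfer hn hQ hR hrank _ hP0 hPj

end Meas

section Prob

variable {Ω : Type*} [inst : MeasurableSpace Ω]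

lemma pastSigma_le (γ : ℕ → Ω → Bool) (hγ : ∀ k, Measurable (γ k)) (k : ℕ) :
    pastSigma γ k ≤ inst :=
  iSup₂_le fun i _ => measurable_iff_comap_le.mp (hγ i)

lemma futureSigma_le (γ : ℕ → Ω → Bool) (hγ : ∀ k, Measurable (γ k)) (j : ℕ) :
    futureSigma γ j ≤ inst :=
  iSup₂_le fun i _ => measurable_iff_comap_le.mp (hγ i)

lemma pastSigma_mono (γ : ℕ → Ω → Bool) {k l : ℕ} (h : k ≤ l) :
    pastSigma γ k ≤ pastSigma γ l :=
  biSup_mono fun _ hi => le_trans hi h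

lemma futureSigma_le_allSigma (γ : ℕ → Ω → Bool) (j : ℕ) :
    futureSigma γ j ≤ ⨆ k, pastSigma γ k := by
  refine iSup₂_le fun i _ => ?_
  refine le_trans ?_ (le_iSup (pastSigma γ) i)
  exact le_iSup₂ (f := fun (i' : ℕ) (_ : i' ∈ {i' : ℕ | i' ≤ i}) =>
    MeasurableSpace.comap (γ i') ⊤) i (le_refl i)

/-- The collection of events measurable in some finite past. -/
def pastPi (γ : ℕ → Ω → Bool) : Set (Set Ω) := {t | ∃ k, MeasurableSet[pastSigma γ k] t}

lemma isPiSystem_pastPi (γ : ℕ → Ω → Bool) : IsPiSystem (pastPi γ) := by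
  rintro s ⟨k, hs⟩ t ⟨l, ht⟩ -
  exact ⟨max k l, (pastSigma_mono γ (le_max_left k l) s hs).inter
    (pastSigma_mono γ (le_max_right k l) t ht)⟩

lemma generateFrom_pastPi (γ : ℕ → Ω → Bool) :
    MeasurableSpace.generateFrom (pastPi γ) = ⨆ k, pastSigma γ k := by
  refine le_antisymm (MeasurableSpace.generateFrom_le ?_) (iSup_le fun k => ?_)
  · rintro t ⟨k, ht⟩
    exact le_iSup (pastSigma γ) k t ht
  · intro t ht
    exact MeasurableSpace.measurableSet_generateFrom ⟨k, ht⟩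

/-- The zero–one law for tail events of a `*`-mixing process. -/
lemma zero_one_of_tail (ℙ : Measure Ω) [IsProbabilityMeasure ℙ] (γ : ℕ → Ω → Bool)
    (hγ : ∀ k, Measurable (γ k)) (hmix : StarMixing ℙ γ) (E : Set Ω)
    (hE : ∀ j, MeasurableSet[futureSigma γ j] E) : ℙ E = 1 ∨ ℙ E = 0 := by
  obtain ⟨N, hN, f, hfmono, hf0, hbound⟩ := hmix
  have hEmeas : MeasurableSet E := futureSigma_le γ hγ 0 E (hE 0)
  -- Step 1 : E is independent of every finite past
  have step1 : ∀ (k : ℕ) (t : Set Ω), MeasurableSet[pastSigma γ k] t →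
      ℙ (t ∩ E) = ℙ t * ℙ E := by
    intro k t ht
    have htmeas : MeasurableSet t := pastSigma_le γ hγ k t ht
    set d := (ℙ (t ∩ E)).toReal - (ℙ t).toReal * (ℙ E).toReal with hd
    have habs : ∀ nn, N ≤ nn → |d| ≤ f nn * ((ℙ t).toReal * (ℙ E).toReal) := by
      intro nn hnn
      have := hbound nn hnn k t E ht (hE (k + nn))
      rwa [mul_assoc] at this
    have hlim : Tendsto (fun nn => f nn * ((ℙ t).toReal * (ℙ E).toReal)) atTop (nhds 0) := by
      simpa using hf0.mul_const ((ℙ t).toReal * (ℙ E).toReal)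
    have habs0 : |d| ≤ 0 :=
      ge_of_tendsto hlim (Filter.eventually_atTop.mpr ⟨N, fun nn hnn => habs nn hnn⟩)
    have hd0 : d = 0 := abs_eq_zero.mp (le_antisymm habs0 (abs_nonneg d))
    have htr : (ℙ (t ∩ E)).toReal = (ℙ t * ℙ E).toReal := by
      rw [ENNReal.toReal_mul]
      have := sub_eq_zero.mp hd0
      linarith [this]
    exact (ENNReal.toReal_eq_toReal_iff' (measure_ne_top ℙ _)
      (ENNReal.mul_ne_top (measure_ne_top ℙ _) (measure_ne_top ℙ _))).mp htr
  -- Step 2 : extend independence to the full σ-algebra via π–λ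
  have hle : (⨆ k, pastSigma γ k) ≤ inst := iSup_le fun k => pastSigma_le γ hγ k
  have hEall : MeasurableSet[⨆ k, pastSigma γ k] E := futureSigma_le_allSigma γ 0 E (hE 0)
  have hself0 : (ℙ.restrict E) E = ((ℙ E) • ℙ) E := by
    refine ext_on_measurableSpace_of_generate_finite inst (pastPi γ) ?_ hle
      (generateFrom_pastPi γ).symm (isPiSystem_pastPi γ) ?_ hEall
    · rintro t ⟨k, ht⟩
      have htmeas : MeasurableSet t := pastSigma_le γ hγ k t ht
      rw [Measure.restrict_apply htmeas, Measure.smul_apply, smul_eq_mul, step1 k t ht, mul_comm]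
    · rw [Measure.restrict_apply_univ, Measure.smul_apply, smul_eq_mul, measure_univ, mul_one]
  have hself : ℙ E = ℙ E * ℙ E := by
    rwa [Measure.restrict_apply hEmeas, Set.inter_self, Measure.smul_apply, smul_eq_mul]
      at hself0
  -- Step 3 : conclude
  set r := (ℙ E).toReal with hr
  have hrr : r = r * r := by
    rw [hr, ← ENNReal.toReal_mul, ← hself]
  have : r * (1 - r) = 0 := by nlinarith
  rcases mul_eq_zero.mp this with h | h
  · right
    rcases (ENNReal.toReal_eq_zero_iff _).mp h with h0 | htop
    · exact h0
    · exact absurd htop (measure_ne_top ℙ E)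
  · left
    exact (ENNReal.toReal_eq_one_iff _).mp (by linarith)

end Prob

end ZOL

/-- Zero-one law for upper and lower almost sure stabilities of Kalman filtering with
`*`-mixing packet losses. -/
theorem zero_one_law_as_stability
    {n m : ℕ} (hn : 0 < n) (hm : 0 < m)
    (A : Matrix (Fin n) (Fin n) ℝ) (hA : IsUnit A.det)
    (hAeig : ∀ μ ∈ spectrum ℂ (A.map Complex.ofReal), 1 ≤ ‖μ‖)
    (C : Matrix (Fin m) (Fin n) ℝ) (hObs : (obsMat C A n).rank = n)
    (Q : Matrix (Fin n) (Fin n) ℝ) (hQ : Q.PosSemidef)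
    (hCtrb : (ctrbMat A ((hQ.1.eigenvectorUnitary : Matrix (Fin n) (Fin n) ℝ) *
      diagonal (Real.sqrt ∘ hQ.1.eigenvalues) * (star hQ.1.eigenvectorUnitary : Matrix (Fin n) (Fin n) ℝ))).rank = n)
    (R : Matrix (Fin m) (Fin m) ℝ) (hR : R.PosDef)
    {Ω : Type*} [MeasurableSpace Ω] (ℙ : Measure Ω) [IsProbabilityMeasure ℙ]
    (γ : ℕ → Ω → Bool) (hγ : ∀ k, Measurable (γ k))
    (hmix : StarMixing ℙ γ)
    (P0 : Matrix (Fin n) (Fin n) ℝ) (hP0 : P0.PosSemidef) :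
    (ℙ {ω | atTop.limsup (fun k => ((filtSeq A Q C R γ P0 k ω).trace : EReal)) < ⊤} = 1 ∨
      ℙ {ω | atTop.limsup (fun k => ((filtSeq A Q C R γ P0 k ω).trace : EReal)) < ⊤} = 0) ∧
    (ℙ {ω | atTop.liminf (fun k => ((filtSeq A Q C R γ P0 k ω).trace : EReal)) < ⊤} = 1 ∨
      ℙ {ω | atTop.liminf (fun k => ((filtSeq A Q C R γ P0 k ω).trace : EReal)) < ⊤} = 0) := by
  constructor
  · refine ZOL.zero_one_of_tail ℙ γ hγ hmix _ fun j => ?_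
    rw [ZOL.Esup_eq_preimage hn hQ hR hCtrb γ hP0 j]
    exact ZOL.measurable_shiftMap γ j (ZOL.SBddEv_meas P0)
  · refine ZOL.zero_one_of_tail ℙ γ hγ hmix _ fun j => ?_
    rw [ZOL.Einf_eq_preimage hn hQ hR hCtrb γ hP0 j]
    exact ZOL.measurable_shiftMap γ j (ZOL.SBddFr_meas P0)
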